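/- arXiv:1610.08677 — 3 statements merged into one kernel-verified Lean document; each statement's English description precedes it below -/
import Mathlib

section
/- For finite sets A_1, ..., A_n that are pairwise disjoint and nonempty, with A = A_1 ∪ ... ∪ A_n of cardinality k, D = A_1 × ... × A_n, and for a subset I ⊆ A define p(I) = ∏_{i=1}^n |A_i ∩ I|. Let c(t) denote the number of subsets {e^1,...,e^t} ⊆ D of cardinality t such that the union of the coordinate-sets of the e^ℓ equals A (where the coordinate-set of e = (e_1,...,e_n) is {e_1,...,e_n}). Then c(t) = ∑_{i=0}^{k-n} (-1)^i ∑_{I ⊆ A, |I| = k - i} C(p(I), t), where C(·,·) denotes the binomial coefficient. -/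
open Finset

private lemma altsum {α : Type*} [DecidableEq α] (B U : Finset α) (hU : U ⊆ B) :
    ∑ I ∈ B.powerset.filter (fun I => U ⊆ I), (-1 : ℤ) ^ (B.card - I.card)
      = if U = B then 1 else 0 := by
  have key : ∑ I ∈ B.powerset.filter (fun I => U ⊆ I), (-1 : ℤ) ^ (B.card - I.card)
      = ∑ J ∈ (B \ U).powerset, (-1 : ℤ) ^ ((B \ U).card - J.card) := by
    refine Finset.sum_nbij' (fun I => I \ U) (fun J => J ∪ U) ?_ ?_ ?_ ?_ ?_
    · intro I hI
      simp only [mem_filter, mem_powerset] at hI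
      exact mem_powerset.2 (sdiff_subset_sdiff hI.1 le_rfl)
    · intro J hJ
      simp only [mem_powerset] at hJ
      exact mem_filter.2 ⟨mem_powerset.2 (union_subset (hJ.trans sdiff_subset) hU),
        subset_union_right⟩
    · intro I hI
      simp only [mem_filter, mem_powerset] at hI
      exact sdiff_union_of_subset hI.2
    · intro J hJ
      simp only [mem_powerset] at hJ
      have hd : Disjoint J U := disjoint_of_subset_left hJ sdiff_disjoint
      show (J ∪ U) \ U = J
      rw [union_sdiff_right, sdiff_eq_self_of_disjoint hd]
    · intro I hI
      simp only [mem_filter, mem_powerset] at hI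
      have h1 : (I \ U).card = I.card - U.card := card_sdiff_of_subset hI.2
      have h2 : (B \ U).card = B.card - U.card := card_sdiff_of_subset hU
      have hUI : U.card ≤ I.card := card_le_card hI.2
      have hIB : I.card ≤ B.card := card_le_card hI.1
      show (-1 : ℤ) ^ (B.card - I.card) = (-1 : ℤ) ^ ((B \ U).card - (I \ U).card)
      congr 1
      omega
  have hpow : ∀ m j : ℕ, j ≤ m → (-1 : ℤ) ^ (m - j) = (-1) ^ m * (-1) ^ j := by
    intro m j h
    rw [← pow_add, show m + j = (m - j) + 2 * j by omega, pow_add, pow_mul]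
    norm_num
  rw [key]
  rw [Finset.sum_congr rfl (fun J hJ => hpow _ _ (card_le_card (mem_powerset.1 hJ))),
    ← Finset.mul_sum, Finset.sum_powerset_neg_one_pow_card]
  by_cases h : U = B
  · simp [h]
  · have h2 : ¬ (B \ U = ∅) := fun he => h (subset_antisymm hU (sdiff_eq_empty_iff_subset.1 he))
    simp [h, h2]

theorem stmt_0 {α : Type*} [DecidableEq α] (n k t : ℕ) (hn : 0 < n) (ht : 0 < t)
    (A : Fin n → Finset α) (hne : ∀ i, (A i).Nonempty)
    (hdisj : ∀ i j, i ≠ j → Disjoint (A i) (A j))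
    (hk : (Finset.univ.biUnion A).card = k) (hnk : n ≤ k) :
    (((((Fintype.piFinset A).powersetCard t)).filter
        (fun S => S.biUnion (fun e => Finset.image e Finset.univ)
          = Finset.univ.biUnion A)).card : ℤ)
      = ∑ i ∈ Finset.range (k - n + 1), (-1 : ℤ) ^ i *
          ∑ I ∈ (Finset.univ.biUnion A).powersetCard (k - i),
            ((∏ j, ((A j) ∩ I).card).choose t : ℤ) := by
  set B := Finset.univ.biUnion A with hBdef
  -- counting lemma
  have countA : ∀ I : Finset α,
      ((((Fintype.piFinset A).powersetCard t).filter
          (fun S => S.biUnion (fun e => Finset.image e Finset.univ) ⊆ I)).card)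
        = (∏ j, ((A j) ∩ I).card).choose t := by
    intro I
    have hset : ((Fintype.piFinset A).powersetCard t).filter
          (fun S => S.biUnion (fun e => Finset.image e Finset.univ) ⊆ I)
        = (Fintype.piFinset (fun j => A j ∩ I)).powersetCard t := by
      ext S
      constructor
      · intro hS
        rw [mem_filter, mem_powersetCard] at hS
        obtain ⟨⟨hsub, hcard⟩, hI⟩ := hS
        rw [mem_powersetCard]
        refine ⟨fun e he => ?_, hcard⟩
        rw [Fintype.mem_piFinset]
        intro j
        rw [mem_inter]
        refine ⟨(Fintype.mem_piFinset.1 (hsub he)) j, hI ?_⟩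
        exact mem_biUnion.2 ⟨e, he, mem_image.2 ⟨j, mem_univ j, rfl⟩⟩
      · intro hS
        rw [mem_powersetCard] at hS
        obtain ⟨hsub, hcard⟩ := hS
        have h' : ∀ e ∈ S, ∀ j, e j ∈ A j ∩ I := fun e he j =>
          Fintype.mem_piFinset.1 (hsub he) j
        rw [mem_filter, mem_powersetCard]
        refine ⟨⟨fun e he => Fintype.mem_piFinset.2
          (fun j => (mem_inter.1 (h' e he j)).1), hcard⟩, ?_⟩
        exact biUnion_subset.2 (fun e he => image_subset_iff.2
          (fun j _ => (mem_inter.1 (h' e he j)).2))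
    rw [hset, card_powersetCard, Fintype.card_piFinset]
  -- vanishing for small I
  have vanish : ∀ I : Finset α, I.card < n → ((∏ j, ((A j) ∩ I).card).choose t : ℤ) = 0 := by
    intro I hI
    have : ∃ j, (A j ∩ I).card = 0 := by
      by_contra h
      push_neg at h
      have hdisj' : ((Finset.univ : Finset (Fin n)) : Set (Fin n)).PairwiseDisjoint
          (fun j => A j ∩ I) := by
        intro a _ b _ hab
        exact (hdisj a b hab).mono inter_subset_left inter_subset_left
      have hcard : (Finset.univ.biUnion (fun j => A j ∩ I)).card
          = ∑ j, (A j ∩ I).card := card_biUnion (fun a _ b _ hab =>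
            (hdisj a b hab).mono inter_subset_left inter_subset_left)
      have h1 : n ≤ ∑ j, (A j ∩ I).card := by
        calc n = ∑ _j : Fin n, 1 := by simp
        _ ≤ ∑ j, (A j ∩ I).card := Finset.sum_le_sum (fun j _ => Nat.one_le_iff_ne_zero.2 (h j))
      have h2 : (Finset.univ.biUnion (fun j => A j ∩ I)) ⊆ I :=
        biUnion_subset.2 (fun j _ => inter_subset_right)
      have := card_le_card h2
      omega
    obtain ⟨j, hj⟩ := this
    rw [Finset.prod_eq_zero (mem_univ j) hj, Nat.choose_eq_zero_of_lt ht]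
    norm_num
  -- the RHS equals the signed powerset sum
  have step12 : (∑ i ∈ Finset.range (k - n + 1), (-1 : ℤ) ^ i *
          ∑ I ∈ B.powersetCard (k - i), ((∏ j, ((A j) ∩ I).card).choose t : ℤ))
      = ∑ I ∈ B.powerset, (-1 : ℤ) ^ (k - I.card) *
          ((∏ j, ((A j) ∩ I).card).choose t : ℤ) := by
    have hext : (∑ i ∈ Finset.range (k - n + 1), (-1 : ℤ) ^ i *
          ∑ I ∈ B.powersetCard (k - i), ((∏ j, ((A j) ∩ I).card).choose t : ℤ))
        = ∑ i ∈ Finset.range (k + 1), (-1 : ℤ) ^ i *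
          ∑ I ∈ B.powersetCard (k - i), ((∏ j, ((A j) ∩ I).card).choose t : ℤ) := by
      refine Finset.sum_subset (Finset.range_subset_range.2 (by omega)) ?_
      intro i hi hni
      simp only [mem_range] at hi hni
      have : ∀ I ∈ B.powersetCard (k - i), ((∏ j, ((A j) ∩ I).card).choose t : ℤ) = 0 := by
        intro I hI
        exact vanish I (by rw [(mem_powersetCard.1 hI).2]; omega)
      rw [Finset.sum_congr rfl this]
      simp
    rw [hext]
    have refl := Finset.sum_range_reflect (fun j => (-1 : ℤ) ^ (k - j) *
        ∑ I ∈ B.powersetCard j, ((∏ l, ((A l) ∩ I).card).choose t : ℤ)) (k + 1)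
    calc ∑ i ∈ Finset.range (k + 1), (-1 : ℤ) ^ i *
            ∑ I ∈ B.powersetCard (k - i), ((∏ j, ((A j) ∩ I).card).choose t : ℤ)
        = ∑ j ∈ Finset.range (k + 1), (-1 : ℤ) ^ (k - j) *
            ∑ I ∈ B.powersetCard j, ((∏ l, ((A l) ∩ I).card).choose t : ℤ) := by
          rw [← refl]
          refine Finset.sum_congr rfl (fun i hi => ?_)
          simp only [mem_range] at hi
          have h1 : k + 1 - 1 - i = k - i := by omega
          have h2 : k - (k - i) = i := by omega
          simp only [h1, h2]
      _ = ∑ I ∈ B.powerset, (-1 : ℤ) ^ (k - I.card) *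
            ((∏ j, ((A j) ∩ I).card).choose t : ℤ) := by
          rw [Finset.sum_powerset B (fun I => (-1 : ℤ) ^ (k - I.card) *
            ((∏ j, ((A j) ∩ I).card).choose t : ℤ)), hk]
          refine Finset.sum_congr rfl (fun j _ => ?_)
          rw [Finset.mul_sum]
          refine Finset.sum_congr rfl (fun I hI => ?_)
          rw [(mem_powersetCard.1 hI).2]
  rw [step12]
  -- double counting
  have hUB : ∀ S ∈ (Fintype.piFinset A).powersetCard t,
      S.biUnion (fun e => Finset.image e Finset.univ) ⊆ B := by
    intro S hS
    refine biUnion_subset.2 (fun e he => ?_)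
    have he' := (mem_powersetCard.1 hS).1 he
    rw [Fintype.mem_piFinset] at he'
    refine image_subset_iff.2 (fun j _ => ?_)
    exact Finset.mem_biUnion.2 ⟨j, mem_univ j, he' j⟩
  calc ((((Fintype.piFinset A).powersetCard t).filter
        (fun S => S.biUnion (fun e => Finset.image e Finset.univ) = B)).card : ℤ)
      = ∑ S ∈ (Fintype.piFinset A).powersetCard t,
          (if S.biUnion (fun e => Finset.image e Finset.univ) = B then 1 else 0) := by
        rw [Finset.card_filter]
        push_cast
        rfl
    _ = ∑ S ∈ (Fintype.piFinset A).powersetCard t,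
          ∑ I ∈ B.powerset.filter
            (fun I => S.biUnion (fun e => Finset.image e Finset.univ) ⊆ I),
          (-1 : ℤ) ^ (B.card - I.card) := by
        refine Finset.sum_congr rfl (fun S hS => ?_)
        rw [altsum B _ (hUB S hS)]
    _ = ∑ S ∈ (Fintype.piFinset A).powersetCard t, ∑ I ∈ B.powerset,
          (if S.biUnion (fun e => Finset.image e Finset.univ) ⊆ I then
            (-1 : ℤ) ^ (B.card - I.card) else 0) := by
        refine Finset.sum_congr rfl (fun S _ => ?_)
        rw [Finset.sum_filter]
    _ = ∑ I ∈ B.powerset, ∑ S ∈ (Fintype.piFinset A).powersetCard t,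
          (if S.biUnion (fun e => Finset.image e Finset.univ) ⊆ I then
            (-1 : ℤ) ^ (B.card - I.card) else 0) := Finset.sum_comm
    _ = ∑ I ∈ B.powerset, (-1 : ℤ) ^ (k - I.card) *
          ((∏ j, ((A j) ∩ I).card).choose t : ℤ) := by
        refine Finset.sum_congr rfl (fun I _ => ?_)
        rw [← Finset.sum_filter, Finset.sum_const, ← countA I, hk]
        push_cast
        ring
end

section
/- For finite sets A_1, ..., A_n that are pairwise disjoint and nonempty with A = A_1 ∪ ... ∪ A_n of cardinality k and D = A_1 × ... × A_n, let c(t) be the number of subsets of D of cardinality t whose elements' coordinate-sets union to all of A. Then the alternating sum ∑_{t=1}^{|D|} (-1)^{t-1} c(t) equals (-1)^{k-n}. -/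
open Finset


lemma aux1 {α : Type*} [DecidableEq α] (U X : Finset α) (hXU : X ⊆ U) :
    ∑ B ∈ U.powerset, (if X ⊆ B then ((-1:ℤ))^((U \ B).card) else 0)
      = if X = U then 1 else 0 := by
  rw [← Finset.sum_filter]
  have h : ∑ B ∈ U.powerset.filter (fun B => X ⊆ B), ((-1:ℤ))^((U \ B).card)
      = ∑ C ∈ (U \ X).powerset, ((-1:ℤ))^C.card := by
    refine Finset.sum_nbij' (fun B => U \ B) (fun C => U \ C) ?_ ?_ ?_ ?_ ?_
    · intro B hB
      simp only [mem_filter, mem_powerset] at hB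
      exact mem_powerset.2 (sdiff_subset_sdiff le_rfl hB.2)
    · intro C hC
      simp only [mem_powerset] at hC
      refine mem_filter.2 ⟨mem_powerset.2 (sdiff_subset), ?_⟩
      exact subset_sdiff.2 ⟨hXU, Finset.disjoint_right.2 fun a ha => (Finset.mem_sdiff.1 (hC ha)).2⟩
    · intro B hB
      simp only [mem_filter, mem_powerset] at hB
      exact Finset.sdiff_sdiff_eq_self hB.1
    · intro C hC
      simp only [mem_powerset] at hC
      exact Finset.sdiff_sdiff_eq_self (hC.trans sdiff_subset)
    · intro B hB; rfl
  rw [h, Finset.sum_powerset_neg_one_pow_card]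
  congr 1
  simp only [eq_iff_iff, sdiff_eq_empty_iff_subset]
  exact ⟨fun h' => le_antisymm hXU h', fun h' => h' ▸ le_rfl⟩

lemma aux2 {α : Type*} [DecidableEq α] {n : ℕ} (A : Fin n → Finset α)
    (hne : ∀ i, (A i).Nonempty) (hdisj : ∀ i j, i ≠ j → Disjoint (A i) (A j)) :
    ∑ B ∈ (Finset.univ.biUnion A).powerset,
      (-1:ℤ)^B.card * (if ∀ i, (A i ∩ B).Nonempty then 1 else 0) = (-1)^n := by
  have hfac : ∏ i : Fin n,
      (∑ C ∈ (A i).powerset, (-1:ℤ)^C.card * (if C.Nonempty then 1 else 0)) = (-1)^n := by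
    have h1 : ∀ i : Fin n,
        (∑ C ∈ (A i).powerset, (-1:ℤ)^C.card * (if C.Nonempty then 1 else 0)) = -1 := by
      intro i
      have h2 : ∀ C : Finset α, (-1:ℤ)^C.card * (if C.Nonempty then 1 else 0)
          = (-1:ℤ)^C.card - (if C = ∅ then 1 else 0) := by
        intro C
        rcases C.eq_empty_or_nonempty with h | h
        · simp [h]
        · simp [h, Finset.nonempty_iff_ne_empty.1 h]
      rw [Finset.sum_congr rfl fun C _ => h2 C, Finset.sum_sub_distrib,
        Finset.sum_powerset_neg_one_pow_card,
        Finset.sum_ite_eq' ((A i).powerset) ∅ (fun _ => (1:ℤ))]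
      simp [Finset.nonempty_iff_ne_empty.1 (hne i)]
    rw [Finset.prod_congr rfl fun i _ => h1 i]
    simp
  rw [Finset.prod_univ_sum] at hfac
  rw [← hfac]
  refine (Finset.sum_nbij' (fun p => Finset.univ.biUnion p) (fun B => fun i => B ∩ A i)
    ?_ ?_ ?_ ?_ ?_).symm
  · intro p hp
    simp only [Fintype.mem_piFinset, mem_powerset] at hp
    exact mem_powerset.2 (biUnion_subset.2 fun i _ =>
      (hp i).trans (subset_biUnion_of_mem A (mem_univ i)))
  · intro B hB
    simp only [Fintype.mem_piFinset, mem_powerset]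
    exact fun i => inter_subset_right
  · intro p hp
    simp only [Fintype.mem_piFinset, mem_powerset] at hp
    funext i
    ext a
    simp only [mem_inter, mem_biUnion, mem_univ, true_and]
    constructor
    · rintro ⟨⟨j, haj⟩, hai⟩
      rcases eq_or_ne j i with rfl | hji
      · exact haj
      · exact absurd hai (Finset.disjoint_left.1 (hdisj j i hji) (hp j haj))
    · intro ha
      exact ⟨⟨i, ha⟩, hp i ha⟩
  · intro B hB
    simp only [mem_powerset] at hB
    ext a
    simp only [mem_biUnion, mem_univ, mem_inter, true_and]
    constructor
    · rintro ⟨i, ha, _⟩; exact ha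
    · intro ha
      obtain ⟨i, _, hai⟩ := mem_biUnion.1 (hB ha)
      exact ⟨i, ha, hai⟩
  · intro p hp
    simp only [Fintype.mem_piFinset, mem_powerset] at hp
    have hcap : ∀ i, A i ∩ Finset.univ.biUnion p = p i := by
      intro i
      ext a
      simp only [mem_inter, mem_biUnion, mem_univ, true_and]
      constructor
      · rintro ⟨hai, j, haj⟩
        rcases eq_or_ne j i with rfl | hji
        · exact haj
        · exact absurd hai (Finset.disjoint_left.1 (hdisj j i hji) (hp j haj))
      · intro ha
        exact ⟨hp i ha, i, ha⟩
    have hcard : (Finset.univ.biUnion p).card = ∑ i, (p i).card :=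
      Finset.card_biUnion fun i _ j _ hij => (hdisj i j hij).mono (hp i) (hp j)
    rw [Finset.prod_mul_distrib, Finset.prod_pow_eq_pow_sum, Finset.prod_boole, hcard]
    congr 1
    simp only [mem_univ, forall_true_left, true_implies]
    congr 1
    simp only [eq_iff_iff]
    exact forall_congr' fun i => by rw [hcap i]


theorem stmt_1 {α : Type*} [DecidableEq α] (n k : ℕ) (hn : 0 < n)
    (A : Fin n → Finset α) (hne : ∀ i, (A i).Nonempty)
    (hdisj : ∀ i j, i ≠ j → Disjoint (A i) (A j))
    (hk : (Finset.univ.biUnion A).card = k) (hnk : n ≤ k) :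
    ∑ t ∈ Finset.Icc 1 (Fintype.piFinset A).card, (-1 : ℤ) ^ (t - 1) *
        ((((Fintype.piFinset A).powersetCard t).filter
          (fun S => S.biUnion (fun e => Finset.image e Finset.univ)
            = Finset.univ.biUnion A)).card : ℤ)
      = (-1 : ℤ) ^ (k - n) := by
  classical
  set U := Finset.univ.biUnion A with hU
  set D := Fintype.piFinset A with hD
  set cov : Finset (Fin n → α) → Finset α := fun S => S.biUnion (fun e => Finset.image e Finset.univ)
    with hcov
  have hUne : U.Nonempty := by
    obtain ⟨a, ha⟩ := hne ⟨0, hn⟩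
    exact ⟨a, Finset.mem_biUnion.2 ⟨⟨0, hn⟩, Finset.mem_univ _, ha⟩⟩
  have hcovsub : ∀ S ∈ D.powerset, cov S ⊆ U := by
    intro S hS
    apply Finset.biUnion_subset.2
    intro e he
    have heD : e ∈ D := Finset.mem_powerset.1 hS he
    rw [Fintype.mem_piFinset] at heD
    intro a ha
    obtain ⟨i, _, rfl⟩ := Finset.mem_image.1 ha
    exact Finset.mem_biUnion.2 ⟨i, Finset.mem_univ _, heD i⟩
  -- the key signed sum over all subsets of D
  have hmain : ∑ S ∈ D.powerset, (-1:ℤ)^S.card * (if cov S = U then 1 else 0)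
      = -((-1:ℤ)^k * (-1)^n) := by
    have step1 : ∑ S ∈ D.powerset, (-1:ℤ)^S.card * (if cov S = U then 1 else 0)
        = ∑ S ∈ D.powerset, ∑ B ∈ U.powerset,
            (if cov S ⊆ B then (-1:ℤ)^S.card * (-1)^((U\B).card) else 0) := by
      refine Finset.sum_congr rfl fun S hS => ?_
      rw [← aux1 U (cov S) (hcovsub S hS), Finset.mul_sum]
      refine Finset.sum_congr rfl fun B hB => ?_
      rw [mul_ite, mul_zero]
    rw [step1, Finset.sum_comm]
    have step3 : ∀ B ∈ U.powerset,
        ∑ S ∈ D.powerset, (if cov S ⊆ B then (-1:ℤ)^S.card * (-1)^((U\B).card) else 0)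
          = (if ∀ i, (A i ∩ B).Nonempty then 0 else 1) * ((-1:ℤ)^k * (-1)^B.card) := by
      intro B hB
      have hpow : ((-1:ℤ))^((U\B).card) = (-1)^k * (-1)^B.card := by
        have h1 : (U\B).card + B.card = k := by
          rw [← hk]; exact Finset.card_sdiff_add_card_eq_card (Finset.mem_powerset.1 hB)
        have h2 : ((-1:ℤ))^B.card * (-1)^B.card = 1 := by
          rw [← pow_add, ← two_mul, pow_mul]; norm_num
        rw [← h1, pow_add, mul_assoc, h2, mul_one]
      rw [← Finset.sum_filter]
      have hfilter : D.powerset.filter (fun S => cov S ⊆ B)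
          = (Fintype.piFinset (fun i => A i ∩ B)).powerset := by
        ext S
        simp only [Finset.mem_filter, Finset.mem_powerset]
        constructor
        · rintro ⟨h1, h2⟩
          intro e he
          rw [Fintype.mem_piFinset]
          intro i
          have hA := Fintype.mem_piFinset.1 (h1 he) i
          have hB2 : e i ∈ B := h2 (Finset.mem_biUnion.2
            ⟨e, he, Finset.mem_image.2 ⟨i, Finset.mem_univ _, rfl⟩⟩)
          exact Finset.mem_inter.2 ⟨hA, hB2⟩
        · intro h
          refine ⟨fun e he => ?_, fun x hx => ?_⟩
          · rw [Fintype.mem_piFinset]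
            intro i
            exact (Finset.mem_inter.1 (Fintype.mem_piFinset.1 (h he) i)).1
          · obtain ⟨e, he, hx⟩ := Finset.mem_biUnion.1 hx
            obtain ⟨i, _, rfl⟩ := Finset.mem_image.1 hx
            exact (Finset.mem_inter.1 (Fintype.mem_piFinset.1 (h he) i)).2
      rw [hfilter]
      have : ∑ S ∈ (Fintype.piFinset (fun i => A i ∩ B)).powerset,
          ((-1:ℤ)^S.card * (-1)^((U\B).card))
          = (∑ S ∈ (Fintype.piFinset (fun i => A i ∩ B)).powerset, (-1:ℤ)^S.card)
              * (-1)^((U\B).card) := by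
        rw [Finset.sum_mul]
      rw [this, Finset.sum_powerset_neg_one_pow_card, hpow]
      have hiff : (Fintype.piFinset (fun i => A i ∩ B) = ∅) ↔ ¬ ∀ i, (A i ∩ B).Nonempty := by
        rw [← Finset.not_nonempty_iff_eq_empty]
        exact not_congr Fintype.piFinset_nonempty
      by_cases h : ∀ i, (A i ∩ B).Nonempty
      · rw [if_neg (fun he => (hiff.1 he) h), if_pos h]
      · rw [if_pos (hiff.2 h), if_neg h]
    rw [Finset.sum_congr rfl step3]
    have expand : ∀ B : Finset α,
        (if ∀ i, (A i ∩ B).Nonempty then (0:ℤ) else 1) * ((-1:ℤ)^k * (-1)^B.card)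
          = (-1:ℤ)^k * ((-1)^B.card - (-1)^B.card * (if ∀ i, (A i ∩ B).Nonempty then 1 else 0)) := by
      intro B
      by_cases h : ∀ i, (A i ∩ B).Nonempty <;> simp [h]
    rw [Finset.sum_congr rfl fun B _ => expand B, ← Finset.mul_sum, Finset.sum_sub_distrib,
      Finset.sum_powerset_neg_one_pow_card_of_nonempty hUne, aux2 A hne hdisj]
    ring
  -- relate the powerset sum to the sum over cardinalities
  have hsum : ∑ t ∈ Finset.range (D.card + 1),
      (-1:ℤ)^t * (((D.powersetCard t).filter (fun S => cov S = U)).card : ℤ)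
      = ∑ S ∈ D.powerset, (-1:ℤ)^S.card * (if cov S = U then 1 else 0) := by
    rw [Finset.sum_powerset D (fun S => (-1:ℤ)^S.card * (if cov S = U then 1 else 0))]
    refine Finset.sum_congr rfl fun t _ => ?_
    rw [← Finset.sum_boole, Finset.mul_sum]
    refine Finset.sum_congr rfl fun S hS => ?_
    rw [(Finset.mem_powersetCard.1 hS).2]
  have hc0 : (((D.powersetCard 0).filter (fun S => cov S = U)).card : ℤ) = 0 := by
    rw [Finset.powersetCard_zero]
    have hfe : Finset.filter (fun S => cov S = U) ({∅} : Finset (Finset (Fin n → α))) = ∅ := by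
      refine Finset.filter_false_of_mem ?_
      intro S hS
      rw [Finset.mem_singleton] at hS
      subst hS
      simp only [hcov, Finset.biUnion_empty]
      exact fun h => hUne.ne_empty h.symm
    rw [hfe]
    simp
  have hsplit : Finset.Icc 1 D.card = (Finset.range (D.card + 1)).erase 0 := by
    ext t
    simp only [Finset.mem_Icc, Finset.mem_erase, Finset.mem_range]
    omega
  have key : ∑ t ∈ Finset.Icc 1 D.card,
      (-1:ℤ)^t * (((D.powersetCard t).filter (fun S => cov S = U)).card : ℤ)
      = -((-1:ℤ)^k * (-1)^n) := by
    rw [hsplit]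
    have := Finset.add_sum_erase (Finset.range (D.card + 1))
      (fun t => (-1:ℤ)^t * (((D.powersetCard t).filter (fun S => cov S = U)).card : ℤ))
      (Finset.mem_range.2 (Nat.succ_pos _))
    rw [← hmain, ← hsum, ← this]
    simp only [hc0, pow_zero, one_mul, zero_add]
  have hneg : ∀ t ∈ Finset.Icc 1 D.card, (-1:ℤ)^(t-1) *
      (((D.powersetCard t).filter (fun S => cov S = U)).card : ℤ)
      = -((-1:ℤ)^t * (((D.powersetCard t).filter (fun S => cov S = U)).card : ℤ)) := by
    intro t ht
    have h1 : 1 ≤ t := (Finset.mem_Icc.1 ht).1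
    have : (-1:ℤ)^t = -(-1:ℤ)^(t-1) := by
      conv_lhs => rw [show t = (t-1)+1 by omega]
      rw [pow_succ]; ring
    rw [this]; ring
  rw [Finset.sum_congr rfl hneg, Finset.sum_neg_distrib, key, neg_neg]
  rw [show k = (k - n) + n from (Nat.sub_add_cancel hnk).symm, pow_add, mul_assoc,
    ← pow_add, ← two_mul, pow_mul]
  norm_num
end

section
/- Let (Ω, ℱ, P) be a probability space, and for i = 1, ..., n let F_{i1}, ..., F_{i t_i} ∈ ℱ be events with F_i = ⋃_{j=1}^{t_i} F_{ij}. Let R = ⋂_{i=1}^n F_i and m = ∑_{i=1}^n t_i. For n ≤ k ≤ m, let C_k be the collection of k-element sets E = {E_1, ..., E_k} of (distinct) events drawn from the F_{ij} such that every index i ∈ {1,...,n} appears among the chosen implementations (i.e., for each i, at least one E_u equals some F_{ij}). Then P(R) = ∑_{k=n}^{m} (-1)^{k-n} ∑_{E ∈ C_k} P(⋂_{j=1}^{k} E_j), provided (to make the counting of sets correct) all the events F_{ij}, j ∈ {1,...,t_i}, i ∈ {1,...,n}, are pairwise distinct as sets. -/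
open Finset MeasureTheory

/-- One-variable expansion: `1 - ∏ (1 - aⱼ)` as a signed sum over nonempty subsets. -/
private lemma one_sub_prod_one_sub {m : ℕ} (a : Fin m → ℝ) :
    1 - ∏ j, (1 - a j) =
      ∑ s ∈ (Finset.univ : Finset (Fin m)).powerset.filter (fun s => s.Nonempty),
        -((-1 : ℝ) ^ s.card * ∏ j ∈ s, a j) := by
  have expand : ∏ j, (1 - a j) =
      ∑ s ∈ (Finset.univ : Finset (Fin m)).powerset, (-1 : ℝ) ^ s.card * ∏ j ∈ s, a j := by
    have h := Finset.prod_add (fun j => -a j) (fun _ => (1 : ℝ))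
        (Finset.univ : Finset (Fin m))
    simp only [Finset.prod_const_one, mul_one] at h
    calc ∏ j, (1 - a j) = ∏ j, (-a j + 1) := by
          refine Finset.prod_congr rfl fun j _ => by ring
      _ = ∑ x ∈ (Finset.univ : Finset (Fin m)).powerset, ∏ i ∈ x, -a i := h
      _ = _ := by
          refine Finset.sum_congr rfl fun x _ => ?_
          rw [show (∏ i ∈ x, -a i) = ∏ i ∈ x, ((-1 : ℝ) * a i) from
            Finset.prod_congr rfl fun i _ => by ring,
            Finset.prod_mul_distrib, Finset.prod_const]
  have hsplit : ∑ s ∈ (Finset.univ : Finset (Fin m)).powerset,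
        (-1 : ℝ) ^ s.card * ∏ j ∈ s, a j
      = (∑ s ∈ (Finset.univ : Finset (Fin m)).powerset.filter (fun s => s.Nonempty),
          (-1 : ℝ) ^ s.card * ∏ j ∈ s, a j) + 1 := by
    rw [← Finset.sum_filter_add_sum_filter_not _ (fun s => s.Nonempty)]
    congr 1
    have : (Finset.univ : Finset (Fin m)).powerset.filter (fun s => ¬ s.Nonempty) = {∅} := by
      ext s
      simp [Finset.not_nonempty_iff_eq_empty]
    rw [this]
    simp
  rw [expand, hsplit, Finset.sum_neg_distrib]
  ring

/-- The key algebraic identity behind inclusion–exclusion for an intersection of unions. -/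
private lemma alg_key (n : ℕ) (t : Fin n → ℕ) (a : ∀ i : Fin n, Fin (t i) → ℝ) :
    ∏ i, (1 - ∏ j, (1 - a i j)) =
      ∑ S ∈ ((Finset.univ : Finset (Σ i : Fin n, Fin (t i))).powerset.filter
          (fun S => ∀ i : Fin n, ∃ x ∈ S, x.1 = i)),
        (-1 : ℝ) ^ (S.card - n) * ∏ x ∈ S, a x.1 x.2 := by
  classical
  calc ∏ i, (1 - ∏ j, (1 - a i j))
      = ∏ i, ∑ s ∈ (Finset.univ : Finset (Fin (t i))).powerset.filter (fun s => s.Nonempty),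
          -((-1 : ℝ) ^ s.card * ∏ j ∈ s, a i j) :=
        Finset.prod_congr rfl fun i _ => one_sub_prod_one_sub (a i)
    _ = ∑ p ∈ Fintype.piFinset
          (fun i => (Finset.univ : Finset (Fin (t i))).powerset.filter (fun s => s.Nonempty)),
          ∏ i, -((-1 : ℝ) ^ (p i).card * ∏ j ∈ p i, a i j) := Finset.prod_univ_sum _ _
    _ = _ := by
        refine Finset.sum_bij' (fun p _ => Finset.univ.sigma p)
          (fun (S : Finset (Σ i : Fin n, Fin (t i))) _ => fun i => @Finset.preimage (Fin (t i)) ((i : Fin n) × Fin (t i)) S (@Sigma.mk (Fin n) (fun i => Fin (t i)) i) (Set.injOn_of_injective (@sigma_mk_injective (Fin n) (fun i => Fin (t i)) i)))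
          ?_ ?_ ?_ ?_ ?_
        · -- image lands in covers
          intro p hp
          simp only [Fintype.mem_piFinset, Finset.mem_filter, Finset.mem_powerset] at hp
          simp only [Finset.mem_filter, Finset.mem_powerset]
          refine ⟨Finset.subset_univ _, fun i => ?_⟩
          obtain ⟨j, hj⟩ := (hp i).2
          exact ⟨⟨i, j⟩, Finset.mem_sigma.2 ⟨Finset.mem_univ _, hj⟩, rfl⟩
        · -- preimage lands in piFinset
          intro S hS
          simp only [Finset.mem_filter, Finset.mem_powerset] at hS
          simp only [Fintype.mem_piFinset, Finset.mem_filter, Finset.mem_powerset]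
          intro i
          refine ⟨Finset.subset_univ _, ?_⟩
          obtain ⟨⟨i', j⟩, hmem, hfst⟩ := hS.2 i
          cases hfst
          exact ⟨j, Finset.mem_preimage.2 hmem⟩
        · -- left inverse
          intro p hp
          funext i
          ext j
          simp [Finset.mem_preimage, Finset.mem_sigma]
        · -- right inverse
          intro S hS
          ext ⟨i, j⟩
          simp [Finset.mem_sigma, Finset.mem_preimage]
        · -- values agree
          intro p hp
          simp only [Fintype.mem_piFinset, Finset.mem_filter, Finset.mem_powerset] at hp
          have hcard : (Finset.univ.sigma p).card = ∑ i, (p i).card := Finset.card_sigma _ _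
          have hn_le : n ≤ ∑ i, (p i).card := by
            calc n = ∑ _i : Fin n, 1 := by simp
              _ ≤ ∑ i, (p i).card :=
                Finset.sum_le_sum fun i _ => Finset.card_pos.2 (hp i).2
          have hsign : ((-1 : ℝ)) ^ ((∑ i, (p i).card) - n)
              = (-1 : ℝ) ^ n * (-1 : ℝ) ^ (∑ i, (p i).card) := by
            have : (-1 : ℝ) ^ (n + (∑ i, (p i).card)) =
                (-1 : ℝ) ^ ((∑ i, (p i).card) - n) * ((-1 : ℝ) ^ 2) ^ n := by
              rw [← pow_mul, ← pow_add]
              congr 1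
              omega
            simpa [pow_add] using this.symm
          calc ∏ i, -((-1 : ℝ) ^ (p i).card * ∏ j ∈ p i, a i j)
              = ∏ i, ((-1 : ℝ) * ((-1 : ℝ) ^ (p i).card * ∏ j ∈ p i, a i j)) := by
                refine Finset.prod_congr rfl fun i _ => by ring
            _ = (-1 : ℝ) ^ n * ((∏ i, (-1 : ℝ) ^ (p i).card) * ∏ i, ∏ j ∈ p i, a i j) := by
                rw [Finset.prod_mul_distrib, Finset.prod_mul_distrib, Finset.prod_const]
                simp [Finset.card_univ]
            _ = (-1 : ℝ) ^ n * ((-1 : ℝ) ^ (∑ i, (p i).card) * ∏ i, ∏ j ∈ p i, a i j) := by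
                rw [Finset.prod_pow_eq_pow_sum]
            _ = (-1 : ℝ) ^ ((Finset.univ.sigma p).card - n)
                  * ∏ x ∈ Finset.univ.sigma p, a x.1 x.2 := by
                rw [hcard, Finset.prod_sigma, hsign]
                ring

/-- Pointwise: the indicator of the intersection of unions is the product expression. -/
private lemma indicator_pointwise {Ω : Type*} (n : ℕ) (t : Fin n → ℕ)
    (F : (i : Fin n) → Fin (t i) → Set Ω) (ω : Ω) :
    Set.indicator (⋂ i, ⋃ j, F i j) (1 : Ω → ℝ) ω
      = ∏ i, (1 - ∏ j, (1 - Set.indicator (F i j) (1 : Ω → ℝ) ω)) := by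
  classical
  have hfac : ∀ i : Fin n, (1 - ∏ j, (1 - Set.indicator (F i j) (1 : Ω → ℝ) ω))
      = Set.indicator (⋃ j, F i j) (1 : Ω → ℝ) ω := by
    intro i
    by_cases h : ω ∈ ⋃ j, F i j
    · obtain ⟨j, hj⟩ := Set.mem_iUnion.1 h
      have hz : ∏ j, (1 - Set.indicator (F i j) (1 : Ω → ℝ) ω) = 0 :=
        Finset.prod_eq_zero (Finset.mem_univ j) (by simp [Set.indicator_of_mem hj])
      simp [hz, Set.indicator_of_mem h]
    · have hall : ∀ j, ω ∉ F i j := by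
        intro j hj; exact h (Set.mem_iUnion.2 ⟨j, hj⟩)
      have hone : ∏ j, (1 - Set.indicator (F i j) (1 : Ω → ℝ) ω) = 1 := by
        refine Finset.prod_eq_one fun j _ => by simp [Set.indicator_of_notMem (hall j)]
      simp [hone, Set.indicator_of_notMem h]
  rw [Finset.prod_congr rfl fun i _ => hfac i]
  by_cases h : ω ∈ ⋂ i, ⋃ j, F i j
  · have : ∀ i : Fin n, ω ∈ ⋃ j, F i j := Set.mem_iInter.1 h
    rw [Set.indicator_of_mem h]
    exact (Finset.prod_eq_one fun i _ => Set.indicator_of_mem (this i) _).symm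
  · obtain ⟨i, hi⟩ : ∃ i : Fin n, ω ∉ ⋃ j, F i j := by
      by_contra hc
      push_neg at hc
      exact h (Set.mem_iInter.2 hc)
    rw [Set.indicator_of_notMem h]
    exact (Finset.prod_eq_zero (Finset.mem_univ i)
      (by simp [Set.indicator_of_notMem hi])).symm

/-- Product of indicators over a finset equals the indicator of the intersection. -/
private lemma prod_indicator_eq {Ω : Type*} {ι : Type*} [DecidableEq ι] (S : Finset ι)
    (G : ι → Set Ω) (ω : Ω) :
    ∏ x ∈ S, Set.indicator (G x) (1 : Ω → ℝ) ω
      = Set.indicator (⋂ x ∈ S, G x) (1 : Ω → ℝ) ω := by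
  by_cases h : ω ∈ ⋂ x ∈ S, G x
  · have hx : ∀ x ∈ S, ω ∈ G x := fun x hx => Set.mem_iInter₂.1 h x hx
    rw [Set.indicator_of_mem h]
    exact Finset.prod_eq_one fun x hxS => Set.indicator_of_mem (hx x hxS) _
  · obtain ⟨x, hxS, hxG⟩ : ∃ x ∈ S, ω ∉ G x := by
      by_contra hc
      push_neg at hc
      exact h (Set.mem_iInter₂.2 hc)
    rw [Set.indicator_of_notMem h]
    exact Finset.prod_eq_zero hxS (by simp [Set.indicator_of_notMem hxG])

theorem stmt_2 {Ω : Type*} [MeasurableSpace Ω] (μ : Measure Ω) [IsProbabilityMeasure μ]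
    (n : ℕ) (hn : 0 < n) (t : Fin n → ℕ) (ht : ∀ i, 0 < t i)
    (F : (i : Fin n) → Fin (t i) → Set Ω)
    (hmeas : ∀ i j, MeasurableSet (F i j))
    (hdist : Function.Injective (fun p : Σ i : Fin n, Fin (t i) => F p.1 p.2)) :
    (μ (⋂ i, ⋃ j, F i j)).toReal
      = ∑ k ∈ Finset.Icc n (∑ i, t i), (-1 : ℝ) ^ (k - n) *
          ∑ S ∈ ((Finset.univ : Finset (Σ i : Fin n, Fin (t i))).powersetCard k).filter
              (fun S => ∀ i : Fin n, ∃ x ∈ S, x.1 = i),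
            (μ (⋂ x ∈ S, F x.1 x.2)).toReal := by
  classical
  set covers : Finset (Finset (Σ i : Fin n, Fin (t i))) :=
    (Finset.univ : Finset (Σ i : Fin n, Fin (t i))).powerset.filter (fun S => ∀ i : Fin n, ∃ x ∈ S, x.1 = i)
    with hcovers
  have hAmeas : ∀ S : Finset (Σ i : Fin n, Fin (t i)), MeasurableSet (⋂ x ∈ S, F x.1 x.2) := fun S =>
    MeasurableSet.iInter fun x => MeasurableSet.iInter fun _ => hmeas x.1 x.2
  have hRmeas : MeasurableSet (⋂ i, ⋃ j, F i j) :=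
    MeasurableSet.iInter fun i => MeasurableSet.iUnion fun j => hmeas i j
  -- Step 1: the RHS equals a single sum over covering sets.
  have hRHS : ∑ k ∈ Finset.Icc n (∑ i, t i), (-1 : ℝ) ^ (k - n) *
          ∑ S ∈ ((Finset.univ : Finset (Σ i : Fin n, Fin (t i))).powersetCard k).filter
              (fun S => ∀ i : Fin n, ∃ x ∈ S, x.1 = i),
            (μ (⋂ x ∈ S, F x.1 x.2)).toReal
      = ∑ S ∈ covers, (-1 : ℝ) ^ (S.card - n) * (μ (⋂ x ∈ S, F x.1 x.2)).toReal := by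
    have hfilter : ∀ k : ℕ, ((Finset.univ : Finset (Σ i : Fin n, Fin (t i))).powersetCard k).filter
          (fun S => ∀ i : Fin n, ∃ x ∈ S, x.1 = i)
        = covers.filter (fun S => S.card = k) := by
      intro k
      ext S
      simp only [hcovers, Finset.powersetCard_eq_filter, Finset.mem_filter,
        Finset.mem_powerset]
      tauto
    have hinner : ∀ k : ℕ, (-1 : ℝ) ^ (k - n) *
          ∑ S ∈ ((Finset.univ : Finset (Σ i : Fin n, Fin (t i))).powersetCard k).filter
              (fun S => ∀ i : Fin n, ∃ x ∈ S, x.1 = i),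
            (μ (⋂ x ∈ S, F x.1 x.2)).toReal
        = ∑ S ∈ covers.filter (fun S => S.card = k),
            (-1 : ℝ) ^ (S.card - n) * (μ (⋂ x ∈ S, F x.1 x.2)).toReal := by
      intro k
      rw [hfilter k, Finset.mul_sum]
      refine Finset.sum_congr rfl fun S hS => ?_
      rw [(Finset.mem_filter.1 hS).2]
    rw [Finset.sum_congr rfl fun k _ => hinner k]
    refine Finset.sum_fiberwise_of_maps_to ?_ _
    intro S hS
    simp only [hcovers, Finset.mem_filter, Finset.mem_powerset] at hS
    have hle : S.card ≤ ∑ i, t i := by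
      have := Finset.card_le_univ S
      simpa [Finset.card_univ, Fintype.card_sigma] using this
    have hge : n ≤ S.card := by
      have himg : S.image (Sigma.fst) = (Finset.univ : Finset (Fin n)) := by
        ext i
        simp only [Finset.mem_image, Finset.mem_univ, iff_true]
        obtain ⟨x, hx, hfst⟩ := hS.2 i
        exact ⟨x, hx, hfst⟩
      calc n = ((Finset.univ : Finset (Fin n))).card := by simp
        _ = (S.image Sigma.fst).card := by rw [himg]
        _ ≤ S.card := Finset.card_image_le
    exact Finset.mem_Icc.2 ⟨hge, hle⟩
  rw [hRHS]
  -- Step 2: pointwise identity for indicators.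
  have hfun : (Set.indicator (⋂ i, ⋃ j, F i j) (1 : Ω → ℝ))
      = fun ω => ∑ S ∈ covers, (-1 : ℝ) ^ (S.card - n) *
          Set.indicator (⋂ x ∈ S, F x.1 x.2) (1 : Ω → ℝ) ω := by
    funext ω
    rw [indicator_pointwise n t F ω,
      alg_key n t (fun i j => Set.indicator (F i j) (1 : Ω → ℝ) ω)]
    exact Finset.sum_congr rfl fun S _ => by
      rw [prod_indicator_eq S (fun x : (Σ i : Fin n, Fin (t i)) => F x.1 x.2) ω]
  -- Step 3: integrate.
  have hint : ∀ S : Finset (Σ i : Fin n, Fin (t i)),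
      Integrable (fun ω => (-1 : ℝ) ^ (S.card - n) *
        Set.indicator (⋂ x ∈ S, F x.1 x.2) (1 : Ω → ℝ) ω) μ := by
    intro S
    exact ((integrable_const (1 : ℝ)).indicator (hAmeas S)).const_mul _
  calc (μ (⋂ i, ⋃ j, F i j)).toReal
      = ∫ ω, Set.indicator (⋂ i, ⋃ j, F i j) (1 : Ω → ℝ) ω ∂μ := by
        rw [integral_indicator_one hRmeas, measureReal_def]
    _ = ∫ ω, ∑ S ∈ covers, (-1 : ℝ) ^ (S.card - n) *
          Set.indicator (⋂ x ∈ S, F x.1 x.2) (1 : Ω → ℝ) ω ∂μ := by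
        rw [hfun]
    _ = ∑ S ∈ covers, ∫ ω, (-1 : ℝ) ^ (S.card - n) *
          Set.indicator (⋂ x ∈ S, F x.1 x.2) (1 : Ω → ℝ) ω ∂μ :=
        integral_finset_sum covers fun S _ => hint S
    _ = ∑ S ∈ covers, (-1 : ℝ) ^ (S.card - n) * (μ (⋂ x ∈ S, F x.1 x.2)).toReal := by
        refine Finset.sum_congr rfl fun S _ => ?_
        rw [integral_const_mul, integral_indicator_one (hAmeas S), measureReal_def]
end
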